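/- arXiv:2405.00837 — 8 statements merged into one kernel-verified Lean document; each statement's English description precedes it below -/
import Mathlib

section
/- Let x_1,...,x_n ∈ ℝ^d, let c ∈ ℝ^d and R > 0, and let I ⊆ {1,...,n} be a set of indices such that ‖x_j − c‖ = R for j ∈ I and ‖x_j − c‖ > R for j ∉ I. Let y ∈ ℝ^d. Suppose w* ∈ Δ^n is supported on I with Σ_i w*_i x_i = y, and w ∈ Δ^n satisfies Σ_i w_i x_i = y and w_j > 0 for some j ∉ I. Then Σ_i w*_i ‖x_i − y‖² < Σ_i w_i ‖x_i − y‖². -/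
open scoped BigOperators

lemma aux_key {d n : ℕ} (x : Fin n → EuclideanSpace ℝ (Fin d))
    (c y : EuclideanSpace ℝ (Fin d))
    (w : Fin n → ℝ) (hw1 : ∑ i, w i = 1)
    (hwy : ∑ i, w i • x i = y) :
    ∑ i, w i * ‖x i - y‖ ^ 2 = ∑ i, w i * ‖x i - c‖ ^ 2 - ‖y - c‖ ^ 2 := by
  have hc : ∑ i, w i • (x i - c) = y - c := by
    simp only [smul_sub, Finset.sum_sub_distrib, hwy, ← Finset.sum_smul, hw1, one_smul]
  have hinner : ∑ i, w i * (inner ℝ (x i - c) (y - c) : ℝ) = ‖y - c‖ ^ 2 := by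
    calc ∑ i, w i * (inner ℝ (x i - c) (y - c) : ℝ)
        = (inner ℝ (∑ i, w i • (x i - c)) (y - c) : ℝ) := by
          rw [sum_inner]; simp_rw [real_inner_smul_left]
      _ = ‖y - c‖ ^ 2 := by rw [hc, real_inner_self_eq_norm_sq]
  have hexp : ∀ i, ‖x i - y‖ ^ 2
      = ‖x i - c‖ ^ 2 - 2 * (inner ℝ (x i - c) (y - c) : ℝ) + ‖y - c‖ ^ 2 := by
    intro i
    have h : x i - y = (x i - c) - (y - c) := by abel
    rw [h, norm_sub_sq_real]
  calc ∑ i, w i * ‖x i - y‖ ^ 2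
      = ∑ i, (w i * ‖x i - c‖ ^ 2 - 2 * (w i * (inner ℝ (x i - c) (y - c) : ℝ))
          + w i * ‖y - c‖ ^ 2) := by
        apply Finset.sum_congr rfl; intro i _; rw [hexp i]; ring
    _ = ∑ i, w i * ‖x i - c‖ ^ 2 - 2 * ∑ i, w i * (inner ℝ (x i - c) (y - c) : ℝ)
          + (∑ i, w i) * ‖y - c‖ ^ 2 := by
        rw [Finset.sum_add_distrib, Finset.sum_sub_distrib, ← Finset.mul_sum,
          Finset.sum_mul]
    _ = ∑ i, w i * ‖x i - c‖ ^ 2 - ‖y - c‖ ^ 2 := by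
        rw [hinner, hw1]; ring

theorem stmt2 {d n : ℕ} (x : Fin n → EuclideanSpace ℝ (Fin d))
    (c : EuclideanSpace ℝ (Fin d)) (R : ℝ) (hR : 0 < R)
    (I : Finset (Fin n))
    (hI : ∀ j ∈ I, ‖x j - c‖ = R) (hI' : ∀ j ∉ I, R < ‖x j - c‖)
    (y : EuclideanSpace ℝ (Fin d))
    (wstar : Fin n → ℝ) (hws : ∀ i, 0 ≤ wstar i) (hws1 : ∑ i, wstar i = 1)
    (hsupp : ∀ i ∉ I, wstar i = 0)
    (hwsy : ∑ i, wstar i • x i = y)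
    (w : Fin n → ℝ) (hw : ∀ i, 0 ≤ w i) (hw1 : ∑ i, w i = 1)
    (hwy : ∑ i, w i • x i = y)
    (j : Fin n) (hj : j ∉ I) (hjpos : 0 < w j) :
    ∑ i, wstar i * ‖x i - y‖ ^ 2 < ∑ i, w i * ‖x i - y‖ ^ 2 := by
  rw [aux_key x c y wstar hws1 hwsy, aux_key x c y w hw1 hwy]
  have hL : ∑ i, wstar i * ‖x i - c‖ ^ 2 = R ^ 2 := by
    have : ∑ i, wstar i * ‖x i - c‖ ^ 2 = ∑ i, wstar i * R ^ 2 := by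
      apply Finset.sum_congr rfl
      intro i _
      by_cases hi : i ∈ I
      · rw [hI i hi]
      · rw [hsupp i hi]; ring
    rw [this, ← Finset.sum_mul, hws1, one_mul]
  have hRle : ∀ i, R ≤ ‖x i - c‖ := by
    intro i
    by_cases hi : i ∈ I
    · exact (hI i hi).ge
    · exact (hI' i hi).le
  have hRi : R ^ 2 < ∑ i, w i * ‖x i - c‖ ^ 2 := by
    have h1 : ∑ i, w i * R ^ 2 < ∑ i, w i * ‖x i - c‖ ^ 2 := by
      apply Finset.sum_lt_sum
      · intro i _
        exact mul_le_mul_of_nonneg_left (pow_le_pow_left₀ hR.le (hRle i) 2) (hw i)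
      · exact ⟨j, Finset.mem_univ j, by
          have : R ^ 2 < ‖x j - c‖ ^ 2 :=
            pow_lt_pow_left₀ (hI' j hj) hR.le (by norm_num)
          exact mul_lt_mul_of_pos_left this hjpos⟩
    calc R ^ 2 = ∑ i, w i * R ^ 2 := by rw [← Finset.sum_mul, hw1, one_mul]
      _ < _ := h1
  rw [hL]
  linarith
end

section
/- Fix ρ > 0, points x_1,...,x_n ∈ ℝ^d (n ≥ 1), and y ∈ ℝ^d such that there exists w_e ∈ Δ^n with Σ_i (w_e)_i x_i = y. Let w_ρ be any minimizer over Δ^n of F(w) = (1/2)‖Σ_i w_i x_i − y‖² + ρ Σ_i w_i ‖x_i − y‖². Then ‖Σ_i (w_ρ)_i x_i − y‖² ≤ ρ C, where C := max_i ‖x_i − y‖² − min_i ‖x_i − y‖². -/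
open scoped BigOperators

theorem stmt3 {d n : ℕ} (ρ : ℝ) (hρ : 0 < ρ)
    (x : Fin n → EuclideanSpace ℝ (Fin d)) (y : EuclideanSpace ℝ (Fin d))
    (hne : (Finset.univ : Finset (Fin n)).Nonempty)
    (we : Fin n → ℝ) (hwe : ∀ i, 0 ≤ we i) (hwe1 : ∑ i, we i = 1)
    (hwey : ∑ i, we i • x i = y)
    (wρ : Fin n → ℝ) (hwρ : ∀ i, 0 ≤ wρ i) (hwρ1 : ∑ i, wρ i = 1)
    (hmin : ∀ v : Fin n → ℝ, (∀ i, 0 ≤ v i) → ∑ i, v i = 1 →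
      (1 / 2) * ‖(∑ i, wρ i • x i) - y‖ ^ 2 + ρ * ∑ i, wρ i * ‖x i - y‖ ^ 2 ≤
      (1 / 2) * ‖(∑ i, v i • x i) - y‖ ^ 2 + ρ * ∑ i, v i * ‖x i - y‖ ^ 2) :
    ‖(∑ i, wρ i • x i) - y‖ ^ 2 ≤
      ρ * (Finset.univ.sup' hne (fun i => ‖x i - y‖ ^ 2)
            - Finset.univ.inf' hne (fun i => ‖x i - y‖ ^ 2)) := by
  set A := ‖(∑ i, wρ i • x i) - y‖ ^ 2 with hAdef
  have hA0 : 0 ≤ A := by positivity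
  set B := ∑ i, wρ i * ‖x i - y‖ ^ 2 with hBdef
  set E := ∑ i, we i * ‖x i - y‖ ^ 2 with hEdef
  have key : ∀ t : ℝ, 0 ≤ t → t ≤ 1 →
      (1/2) * A + ρ * B ≤ (1/2) * ((1-t)^2 * A) + ρ * ((1-t) * B + t * E) := by
    intro t ht0 ht1
    have hvpos : ∀ i, 0 ≤ (1-t) * wρ i + t * we i := fun i => by
      have := hwρ i; have := hwe i; nlinarith
    have hvsum : ∑ i, ((1-t) * wρ i + t * we i) = 1 := by
      simp [Finset.sum_add_distrib, ← Finset.mul_sum, hwρ1, hwe1]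
    have h := hmin (fun i => (1-t) * wρ i + t * we i) hvpos hvsum
    have hsum : (∑ i, ((1-t) * wρ i + t * we i) • x i) - y
        = (1-t) • ((∑ i, wρ i • x i) - y) := by
      simp only [add_smul, mul_smul, Finset.sum_add_distrib, ← Finset.smul_sum, hwey]
      module
    have hnorm : ‖(∑ i, ((1-t) * wρ i + t * we i) • x i) - y‖ ^ 2 = (1-t)^2 * A := by
      rw [hsum, norm_smul, mul_pow, Real.norm_eq_abs, sq_abs]
    have hρsum : ∑ i, ((1-t) * wρ i + t * we i) * ‖x i - y‖ ^ 2
        = (1-t) * B + t * E := by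
      simp [add_mul, Finset.sum_add_distrib, hBdef, hEdef, Finset.mul_sum, mul_assoc]
    simpa [hnorm, hρsum] using h
  set R := ρ * (E - B) with hRdef
  have hR0 : 0 ≤ R := by
    have h1 := key 1 zero_le_one le_rfl
    nlinarith
  have hAR : A ≤ R := by
    by_contra h
    push_neg at h
    have hApos : 0 < A := lt_of_le_of_lt hR0 h
    set t := (A - R) / A with htdef
    have ht0' : 0 < t := div_pos (by linarith) hApos
    have ht0 : 0 ≤ t := ht0'.le
    have ht1 : t ≤ 1 := by
      rw [htdef, div_le_one hApos]; linarith
    have htA : t * A = A - R := by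
      rw [htdef]; field_simp
    have h2 := key t ht0 ht1
    nlinarith [mul_pos ht0' hApos]
  have hEM : E ≤ Finset.univ.sup' hne (fun i => ‖x i - y‖ ^ 2) := by
    calc E ≤ ∑ i, we i * Finset.univ.sup' hne (fun i => ‖x i - y‖ ^ 2) := by
          apply Finset.sum_le_sum
          intro i _
          exact mul_le_mul_of_nonneg_left (Finset.le_sup' (fun i => ‖x i - y‖ ^ 2) (Finset.mem_univ i)) (hwe i)
      _ = _ := by rw [← Finset.sum_mul, hwe1, one_mul]
  have hmB : Finset.univ.inf' hne (fun i => ‖x i - y‖ ^ 2) ≤ B := by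
    have h1 : Finset.univ.inf' hne (fun i => ‖x i - y‖ ^ 2)
        = ∑ i, wρ i * Finset.univ.inf' hne (fun i => ‖x i - y‖ ^ 2) := by
      rw [← Finset.sum_mul, hwρ1, one_mul]
    rw [h1]
    apply Finset.sum_le_sum
    intro i _
    exact mul_le_mul_of_nonneg_left
      (Finset.inf'_le (fun i => ‖x i - y‖ ^ 2) (Finset.mem_univ i)) (hwρ i)
  calc A ≤ R := hAR
    _ ≤ _ := by
        rw [hRdef]
        apply mul_le_mul_of_nonneg_left _ hρ.le
        linarith
end

section
/- Let x_1,...,x_n ∈ ℝ^d, y ∈ ℝ^d, ρ > 0. Let w_proj ∈ Δ^n be such that p := Σ_i (w_proj)_i x_i is the Euclidean projection of y onto the convex hull of {x_1,...,x_n}, and let w_ρ ∈ Δ^n minimize (1/2)‖Σ_i w_i x_i − y‖² + ρ Σ_i w_i‖x_i − y‖² over Δ^n. Then ‖Σ_i (w_ρ)_i x_i − p‖² ≤ ρ C, where C := max_i ‖x_i − y‖² − min_i ‖x_i − y‖². -/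
open scoped BigOperators
open Finset
open scoped InnerProductSpace

theorem stmt5 {d n : ℕ} (x : Fin n → EuclideanSpace ℝ (Fin d))
    (y : EuclideanSpace ℝ (Fin d)) (ρ : ℝ) (hρ : 0 < ρ)
    (hne : (Finset.univ : Finset (Fin n)).Nonempty)
    (wproj : Fin n → ℝ) (hwp : ∀ i, 0 ≤ wproj i) (hwp1 : ∑ i, wproj i = 1)
    (p : EuclideanSpace ℝ (Fin d)) (hp : p = ∑ i, wproj i • x i)
    (hproj : ∀ v ∈ convexHull ℝ (Set.range x), ‖p - y‖ ≤ ‖v - y‖)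
    (wρ : Fin n → ℝ) (hwρ : ∀ i, 0 ≤ wρ i) (hwρ1 : ∑ i, wρ i = 1)
    (hmin : ∀ v : Fin n → ℝ, (∀ i, 0 ≤ v i) → ∑ i, v i = 1 →
      (1 / 2) * ‖(∑ i, wρ i • x i) - y‖ ^ 2 + ρ * ∑ i, wρ i * ‖x i - y‖ ^ 2 ≤
      (1 / 2) * ‖(∑ i, v i • x i) - y‖ ^ 2 + ρ * ∑ i, v i * ‖x i - y‖ ^ 2) :
    ‖(∑ i, wρ i • x i) - p‖ ^ 2 ≤
      ρ * (Finset.univ.sup' hne (fun i => ‖x i - y‖ ^ 2)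
            - Finset.univ.inf' hne (fun i => ‖x i - y‖ ^ 2)) := by
  classical
  set q : EuclideanSpace ℝ (Fin d) := ∑ i, wρ i • x i with hq
  set K : Set (EuclideanSpace ℝ (Fin d)) := convexHull ℝ (Set.range x) with hK
  have hKconv : Convex ℝ K := convex_convexHull ℝ _
  have hxK : ∀ i, x i ∈ K := fun i => subset_convexHull ℝ _ ⟨i, rfl⟩
  have hqK : q ∈ K := hKconv.sum_mem (fun i _ => hwρ i) hwρ1 (fun i _ => hxK i)
  have hpK : p ∈ K := hp ▸ hKconv.sum_mem (fun i _ => hwp i) hwp1 (fun i _ => hxK i)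
  haveI : Nonempty K := ⟨⟨p, hpK⟩⟩
  -- projection variational inequality
  have hiInf : ‖y - p‖ = ⨅ w : K, ‖y - w‖ := by
    refine le_antisymm (le_ciInf fun w => ?_)
      (ciInf_le ⟨0, fun _ ⟨_, h⟩ => h ▸ norm_nonneg _⟩ (⟨p, hpK⟩ : K))
    rw [norm_sub_rev y, norm_sub_rev y (w : EuclideanSpace ℝ (Fin d))]
    exact hproj _ w.2
  have hinner : ⟪y - p, q - p⟫_ℝ ≤ 0 :=
    (norm_eq_iInf_iff_real_inner_le_zero hKconv hpK).mp hiInf q hqK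
  set c : Fin n → ℝ := fun i => ‖x i - y‖ ^ 2 with hc
  set A : ℝ := ∑ i, wproj i * c i with hA
  set B : ℝ := ∑ i, wρ i * c i with hB
  set S : ℝ := ‖q - p‖ ^ 2 with hS
  have hSnn : 0 ≤ S := sq_nonneg _
  -- key inequality for each t ∈ (0,1]
  have hkey : ∀ t : ℝ, 0 < t → t ≤ 1 → S ≤ t / 2 * S + ρ * (A - B) := by
    intro t ht0 ht1
    have hv0 : ∀ i, 0 ≤ (1 - t) * wρ i + t * wproj i := fun i =>
      add_nonneg (mul_nonneg (by linarith) (hwρ i)) (mul_nonneg ht0.le (hwp i))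
    have hv1 : ∑ i, ((1 - t) * wρ i + t * wproj i) = 1 := by
      simp [Finset.sum_add_distrib, ← Finset.mul_sum, hwρ1, hwp1]
    have hsum : (∑ i, ((1 - t) * wρ i + t * wproj i) • x i) = (1 - t) • q + t • p := by
      rw [hq, hp, Finset.smul_sum, Finset.smul_sum, ← Finset.sum_add_distrib]
      exact Finset.sum_congr rfl fun i _ => by rw [add_smul, mul_smul, mul_smul]
    have hcsum : (∑ i, ((1 - t) * wρ i + t * wproj i) * c i) = (1 - t) * B + t * A := by
      rw [hB, hA, Finset.mul_sum, Finset.mul_sum, ← Finset.sum_add_distrib]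
      exact Finset.sum_congr rfl fun i _ => by ring
    have h1 := hmin _ hv0 hv1
    rw [hsum, hcsum] at h1
    have hvec : (1 - t) • q + t • p - y = (q - y) + t • (p - q) := by
      module
    rw [hvec, norm_add_sq_real] at h1
    have hns : ‖t • (p - q)‖ = t * ‖p - q‖ := by
      rw [norm_smul, Real.norm_eq_abs, abs_of_pos ht0]
    rw [real_inner_smul_right, hns] at h1
    -- from h1: 0 ≤ t * ⟪q-y, p-q⟫ + t^2/2 ‖p-q‖^2 + ρ t (A - B)
    have h2 : -⟪q - y, p - q⟫_ℝ ≤ t / 2 * ‖p - q‖ ^ 2 + ρ * (A - B) := by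
      nlinarith [sq_nonneg (t * ‖p - q‖)]
    have h3 : S ≤ -⟪q - y, p - q⟫_ℝ := by
      have hdecomp : q - p = (q - y) + (y - p) := by abel
      have : S = ⟪q - y, q - p⟫_ℝ + ⟪y - p, q - p⟫_ℝ := by
        rw [hS, ← real_inner_self_eq_norm_sq, hdecomp, inner_add_left]
      have hneg : ⟪q - y, p - q⟫_ℝ = -⟪q - y, q - p⟫_ℝ := by
        rw [show p - q = -(q - p) by abel, inner_neg_right]
      linarith
    have hpq : ‖p - q‖ ^ 2 = S := by rw [hS, norm_sub_rev]
    rw [hpq] at h2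
    linarith
  -- conclude S ≤ ρ (A - B)
  have hmain : S ≤ ρ * (A - B) := by
    refine le_of_forall_pos_le_add fun ε hε => ?_
    have ht0 : 0 < min 1 (2 * ε / (S + 1)) :=
      lt_min one_pos (by positivity)
    have h := hkey _ ht0 (min_le_left _ _)
    have htle : min 1 (2 * ε / (S + 1)) ≤ 2 * ε / (S + 1) := min_le_right _ _
    have hS1 : 0 < S + 1 := by linarith
    have : min 1 (2 * ε / (S + 1)) / 2 * S ≤ ε := by
      have h4 : min 1 (2 * ε / (S + 1)) / 2 * S ≤ (2 * ε / (S + 1)) / 2 * S := by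
        apply mul_le_mul_of_nonneg_right _ hSnn
        linarith
      have h5 : (2 * ε / (S + 1)) / 2 * S ≤ ε := by
        rw [div_div, div_mul_eq_mul_div, div_le_iff₀ (by positivity : (0:ℝ) < (S + 1) * 2)]
        nlinarith
      linarith
    linarith
  -- compare A, B with sup, inf
  have hAle : A ≤ Finset.univ.sup' hne c := by
    calc A ≤ ∑ i, wproj i * Finset.univ.sup' hne c :=
          Finset.sum_le_sum fun i _ =>
            mul_le_mul_of_nonneg_left (Finset.le_sup' c (Finset.mem_univ i)) (hwp i)
      _ = Finset.univ.sup' hne c := by rw [← Finset.sum_mul, hwp1, one_mul]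
  have hBge : Finset.univ.inf' hne c ≤ B := by
    calc (Finset.univ.inf' hne c) = ∑ i, wρ i * Finset.univ.inf' hne c := by
          rw [← Finset.sum_mul, hwρ1, one_mul]
      _ ≤ B := Finset.sum_le_sum fun i _ =>
          mul_le_mul_of_nonneg_left (Finset.inf'_le c (Finset.mem_univ i)) (hwρ i)
  have : ρ * (A - B) ≤ ρ * (Finset.univ.sup' hne c - Finset.univ.inf' hne c) := by
    apply mul_le_mul_of_nonneg_left _ hρ.le
    linarith
  calc ‖q - p‖ ^ 2 = S := rfl
    _ ≤ ρ * (A - B) := hmain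
    _ ≤ _ := this
end

section
/- Let x_1,...,x_n ∈ ℝ^d, let c ∈ ℝ^d, R > 0, and I ⊆ {1,...,n} with ‖x_j − c‖ = R for j ∈ I and ‖x_j − c‖ > R for j ∉ I. Let y ∈ ℝ^d, let w* ∈ Δ^n be supported on I with Σ_i w*_i x_i = y, and let w ∈ Δ^n satisfy Σ_i w_i x_i = y with w_α > 0 for some α ∉ I. Then Σ_i w*_i ‖x_i − y‖² = R² − ‖c − y‖² < Σ_i w_i ‖x_i − y‖². -/
open scoped BigOperators

lemma key_locality {d n : ℕ} (x : Fin n → EuclideanSpace ℝ (Fin d))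
    (c y : EuclideanSpace ℝ (Fin d)) (v : Fin n → ℝ) (hv1 : ∑ i, v i = 1)
    (hvy : ∑ i, v i • x i = y) :
    ∑ i, v i * ‖x i - y‖ ^ 2 = ∑ i, v i * ‖x i - c‖ ^ 2 - ‖c - y‖ ^ 2 := by
  have hsum : ∑ i, v i • (x i - c) = y - c := by
    simp only [smul_sub, Finset.sum_sub_distrib, hvy, ← Finset.sum_smul, hv1, one_smul]
  have h1 : ∀ i, ‖x i - y‖ ^ 2
      = ‖x i - c‖ ^ 2 + 2 * inner ℝ (x i - c) (c - y) + ‖c - y‖ ^ 2 := by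
    intro i
    have h : x i - y = (x i - c) + (c - y) := by abel
    rw [h, norm_add_sq_real]
  have hinner : ∑ i, v i * (inner ℝ (x i - c) (c - y) : ℝ) = - ‖c - y‖ ^ 2 := by
    have := sum_inner (𝕜 := ℝ) (s := Finset.univ) (fun i => v i • (x i - c)) (c - y)
    rw [hsum] at this
    have h2 : (inner ℝ (y - c) (c - y) : ℝ) = - ‖c - y‖ ^ 2 := by
      have : y - c = -(c - y) := by abel
      rw [this, inner_neg_left, real_inner_self_eq_norm_sq]
    simp only [real_inner_smul_left] at this
    rw [← this, h2]
  calc ∑ i, v i * ‖x i - y‖ ^ 2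
      = ∑ i, (v i * ‖x i - c‖ ^ 2 + 2 * (v i * inner ℝ (x i - c) (c - y)) + v i * ‖c - y‖ ^ 2) := by
        refine Finset.sum_congr rfl fun i _ => ?_
        rw [h1 i]; ring
    _ = ∑ i, v i * ‖x i - c‖ ^ 2 + 2 * ∑ i, v i * (inner ℝ (x i - c) (c - y) : ℝ)
        + (∑ i, v i) * ‖c - y‖ ^ 2 := by
        rw [Finset.sum_add_distrib, Finset.sum_add_distrib, ← Finset.mul_sum, ← Finset.sum_mul]
    _ = ∑ i, v i * ‖x i - c‖ ^ 2 - ‖c - y‖ ^ 2 := by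
        rw [hinner, hv1]; ring

theorem stmt8 {d n : ℕ} (x : Fin n → EuclideanSpace ℝ (Fin d))
    (c : EuclideanSpace ℝ (Fin d)) (R : ℝ) (hR : 0 < R)
    (I : Finset (Fin n))
    (hI : ∀ j ∈ I, ‖x j - c‖ = R) (hI' : ∀ j ∉ I, R < ‖x j - c‖)
    (y : EuclideanSpace ℝ (Fin d))
    (wstar : Fin n → ℝ) (hws : ∀ i, 0 ≤ wstar i) (hws1 : ∑ i, wstar i = 1)
    (hsupp : ∀ i ∉ I, wstar i = 0)
    (hwsy : ∑ i, wstar i • x i = y)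
    (w : Fin n → ℝ) (hw : ∀ i, 0 ≤ w i) (hw1 : ∑ i, w i = 1)
    (hwy : ∑ i, w i • x i = y)
    (α : Fin n) (hα : α ∉ I) (hαpos : 0 < w α) :
    ∑ i, wstar i * ‖x i - y‖ ^ 2 = R ^ 2 - ‖c - y‖ ^ 2 ∧
    R ^ 2 - ‖c - y‖ ^ 2 < ∑ i, w i * ‖x i - y‖ ^ 2 := by
  have hRle : ∀ i, R ≤ ‖x i - c‖ := by
    intro i
    by_cases h : i ∈ I
    · exact (hI i h).ge
    · exact (hI' i h).le
  constructor
  · rw [key_locality x c y wstar hws1 hwsy]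
    have : ∑ i, wstar i * ‖x i - c‖ ^ 2 = ∑ i, wstar i * R ^ 2 := by
      refine Finset.sum_congr rfl fun i _ => ?_
      by_cases h : i ∈ I
      · rw [hI i h]
      · rw [hsupp i h]; ring
    rw [this, ← Finset.sum_mul, hws1, one_mul]
  · rw [key_locality x c y w hw1 hwy]
    have hlt : ∑ i, w i * R ^ 2 < ∑ i, w i * ‖x i - c‖ ^ 2 := by
      refine Finset.sum_lt_sum (fun i _ => ?_) ⟨α, Finset.mem_univ α, ?_⟩
      · exact mul_le_mul_of_nonneg_left
          (pow_le_pow_left₀ hR.le (hRle i) 2) (hw i)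
      · exact mul_lt_mul_of_pos_left
          (pow_lt_pow_left₀ (hI' α hα) hR.le two_ne_zero) hαpos
    have hs : ∑ i, w i * R ^ 2 = R ^ 2 := by
      rw [← Finset.sum_mul, hw1, one_mul]
    linarith
end

section
/- Let x_1,...,x_n ∈ ℝ^d and suppose there exist c ∈ ℝ^d and R > 0 and an index set I ⊆ {1,...,n} with |I| ≤ d+1 such that ‖x_j − c‖ = R for j ∈ I and ‖x_j − c‖ > R for j ∉ I, and suppose y is in the convex hull of {x_j : j ∈ I}. Then any minimizer w* of Σ_i w_i‖x_i − y‖² over {w ∈ Δ^n : Σ_i w_i x_i = y} is supported on I; in particular w* has at most d+1 nonzero entries. -/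
open scoped BigOperators

private lemma keyid {d n : ℕ} (x : Fin n → EuclideanSpace ℝ (Fin d))
    (c y : EuclideanSpace ℝ (Fin d)) (w : Fin n → ℝ)
    (h1 : ∑ i, w i = 1) (h2 : ∑ i, w i • x i = y) :
    ∑ i, w i * ‖x i - y‖ ^ 2 = ∑ i, w i * ‖x i - c‖ ^ 2 - ‖y - c‖ ^ 2 := by
  have hxc : ∑ i, w i • (x i - c) = y - c := by
    simp only [smul_sub, Finset.sum_sub_distrib, h2, ← Finset.sum_smul, h1, one_smul]
  have hinner : ∑ i, w i * (inner ℝ (x i - c) (y - c) : ℝ) = ‖y - c‖ ^ 2 := by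
    calc ∑ i, w i * (inner ℝ (x i - c) (y - c) : ℝ)
        = ∑ i, (inner ℝ (w i • (x i - c)) (y - c) : ℝ) := by
          refine Finset.sum_congr rfl fun i _ => ?_
          rw [real_inner_smul_left]
      _ = (inner ℝ (∑ i, w i • (x i - c)) (y - c) : ℝ) := (sum_inner _ _ _).symm
      _ = (inner ℝ (y - c) (y - c) : ℝ) := by rw [hxc]
      _ = ‖y - c‖ ^ 2 := real_inner_self_eq_norm_sq _
  have hterm : ∀ i, ‖x i - y‖ ^ 2
      = ‖x i - c‖ ^ 2 - 2 * (inner ℝ (x i - c) (y - c) : ℝ) + ‖y - c‖ ^ 2 := by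
    intro i
    rw [show x i - y = (x i - c) - (y - c) by abel]
    exact norm_sub_sq_real _ _
  calc ∑ i, w i * ‖x i - y‖ ^ 2
      = ∑ i, (w i * ‖x i - c‖ ^ 2 - 2 * (w i * (inner ℝ (x i - c) (y - c) : ℝ))
          + w i * ‖y - c‖ ^ 2) := by
        refine Finset.sum_congr rfl fun i _ => ?_
        rw [hterm i]; ring
    _ = ∑ i, w i * ‖x i - c‖ ^ 2 - 2 * ∑ i, w i * (inner ℝ (x i - c) (y - c) : ℝ)
          + (∑ i, w i) * ‖y - c‖ ^ 2 := by
        rw [Finset.sum_add_distrib, Finset.sum_sub_distrib, ← Finset.mul_sum,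
          ← Finset.sum_mul]
    _ = ∑ i, w i * ‖x i - c‖ ^ 2 - ‖y - c‖ ^ 2 := by
        rw [hinner, h1]; ring

theorem stmt10 {d n : ℕ} (x : Fin n → EuclideanSpace ℝ (Fin d))
    (c : EuclideanSpace ℝ (Fin d)) (R : ℝ) (hR : 0 < R)
    (I : Finset (Fin n)) (hcard : I.card ≤ d + 1)
    (hI : ∀ j ∈ I, ‖x j - c‖ = R) (hI' : ∀ j ∉ I, R < ‖x j - c‖)
    (y : EuclideanSpace ℝ (Fin d))
    (hy : y ∈ convexHull ℝ (x '' (I : Set (Fin n))))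
    (wstar : Fin n → ℝ) (hws : ∀ i, 0 ≤ wstar i) (hws1 : ∑ i, wstar i = 1)
    (hwsy : ∑ i, wstar i • x i = y)
    (hmin : ∀ w : Fin n → ℝ, (∀ i, 0 ≤ w i) → ∑ i, w i = 1 →
      ∑ i, w i • x i = y →
      ∑ i, wstar i * ‖x i - y‖ ^ 2 ≤ ∑ i, w i * ‖x i - y‖ ^ 2) :
    ∀ i ∉ I, wstar i = 0 := by
  -- extract a feasible weight vector supported on I from the convex hull membership
  rw [convexHull_eq] at hy
  obtain ⟨ι, t, u, z, hu0, hu1, hz, hcm⟩ := hy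
  have hrep : ∀ i : {i // i ∈ t}, ∃ j, j ∈ I ∧ x j = z i.1 := by
    intro i
    obtain ⟨j, hj, hxj⟩ := hz i.1 i.2
    exact ⟨j, hj, hxj⟩
  choose g hgI hgx using hrep
  set w₀ : Fin n → ℝ := fun j => ∑ i ∈ t.attach, if g i = j then u i.1 else 0 with hw₀
  have hw₀0 : ∀ j, 0 ≤ w₀ j := by
    intro j
    refine Finset.sum_nonneg fun i _ => ?_
    split
    · exact hu0 i.1 i.2
    · exact le_refl 0
  have hw₀off : ∀ j ∉ I, w₀ j = 0 := by
    intro j hj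
    refine Finset.sum_eq_zero fun i _ => ?_
    have : g i ≠ j := fun h => hj (h ▸ hgI i)
    simp [this]
  have hw₀1 : ∑ j, w₀ j = 1 := by
    rw [hw₀]
    rw [Finset.sum_comm]
    have : ∀ i ∈ t.attach, ∑ j, (if g i = j then u i.1 else 0) = u i.1 := by
      intro i _
      simp [Finset.sum_ite_eq]
    rw [Finset.sum_congr rfl this, Finset.sum_attach t u, hu1]
  have hcm' : ∑ i ∈ t, u i • z i = y := by
    rw [← Finset.centerMass_eq_of_sum_1 t z hu1]; exact hcm
  have hw₀y : ∑ j, w₀ j • x j = y := by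
    have : ∑ j, w₀ j • x j = ∑ i ∈ t.attach, ∑ j, (if g i = j then u i.1 else 0) • x j := by
      simp only [hw₀, Finset.sum_smul]
      exact Finset.sum_comm
    rw [this]
    have h2 : ∀ i ∈ t.attach, ∑ j, (if g i = j then u i.1 else 0) • x j = u i.1 • z i.1 := by
      intro i _
      have : ∀ j, (if g i = j then u i.1 else 0) • x j = if g i = j then u i.1 • x j else 0 := by
        intro j; split <;> simp
      simp only [this]
      rw [Finset.sum_ite_eq]
      simp [hgx i]
    rw [Finset.sum_congr rfl h2, ← hcm']
    exact Finset.sum_attach t fun i => u i • z i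
  -- value of the objective at w₀ related to R
  have hw₀val : ∑ j, w₀ j * ‖x j - c‖ ^ 2 = R ^ 2 := by
    have : ∀ j, w₀ j * ‖x j - c‖ ^ 2 = w₀ j * R ^ 2 := by
      intro j
      by_cases hj : j ∈ I
      · rw [hI j hj]
      · rw [hw₀off j hj]; ring
    rw [Finset.sum_congr rfl fun j _ => this j, ← Finset.sum_mul, hw₀1, one_mul]
  have hle := hmin w₀ hw₀0 hw₀1 hw₀y
  rw [keyid x c y wstar hws1 hwsy, keyid x c y w₀ hw₀1 hw₀y, hw₀val] at hle
  have hle' : ∑ i, wstar i * ‖x i - c‖ ^ 2 ≤ R ^ 2 := by linarith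
  -- each term of ∑ wstar i * (‖x i - c‖^2 - R^2) is nonneg, sum ≤ 0, hence all zero
  have hnn : ∀ i ∈ Finset.univ, 0 ≤ wstar i * (‖x i - c‖ ^ 2 - R ^ 2) := by
    intro i _
    apply mul_nonneg (hws i)
    have : R ≤ ‖x i - c‖ := by
      by_cases hi : i ∈ I
      · exact (hI i hi).ge
      · exact (hI' i hi).le
    nlinarith
  have hsum0 : ∑ i, wstar i * (‖x i - c‖ ^ 2 - R ^ 2) = 0 := by
    have h1 : ∑ i, wstar i * (‖x i - c‖ ^ 2 - R ^ 2)
        = ∑ i, wstar i * ‖x i - c‖ ^ 2 - (∑ i, wstar i) * R ^ 2 := by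
      rw [Finset.sum_mul, ← Finset.sum_sub_distrib]
      exact Finset.sum_congr rfl fun i _ => by ring
    have h2 : ∑ i, wstar i * (‖x i - c‖ ^ 2 - R ^ 2) ≤ 0 := by
      rw [h1, hws1]; linarith
    exact le_antisymm h2 (Finset.sum_nonneg hnn)
  intro i hi
  have := (Finset.sum_eq_zero_iff_of_nonneg hnn).mp hsum0 i (Finset.mem_univ i)
  have hgt : R ^ 2 < ‖x i - c‖ ^ 2 := by
    have := hI' i hi
    nlinarith
  rcases mul_eq_zero.mp this with h | h
  · exact h
  · nlinarith
end

section
/- Let x_1,...,x_n ∈ ℝ^d and y ∈ ℝ^d, and let c ∈ ℝ^d, R > 0, I ⊆ {1,...,n} satisfy ‖x_j − c‖ = R for j ∈ I and ‖x_j − c‖ > R for j ∉ I. Let S := conv{x_j : j ∈ I} and suppose y lies in the interior of S. Define C := max_i‖x_i − y‖² − min_i‖x_i − y‖² and d_S := min_{z ∈ ∂S} ‖z − y‖² (the squared distance from y to the boundary of S). Assume C > 0 and 0 < ρ < d_S / C. Then every minimizer w_ρ over Δ^n of (1/2)‖Σ_i w_i x_i − y‖² + ρ Σ_i w_i‖x_i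 − y‖² is supported on I, hence has at most |I| ≤ d+1 nonzero entries. -/
open scoped BigOperators RealInnerProductSpace

section Helpers

variable {E : Type*} [NormedAddCommGroup E] [InnerProductSpace ℝ E]

lemma seg_crossing {S : Set E} (hS : IsClosed S) {y w : E}
    (hy : y ∈ interior S) (hw : w ∉ S) :
    ∃ b : ℝ, 0 ≤ b ∧ b ≤ 1 ∧ y + b • (w - y) ∈ frontier S := by
  by_cases hf : (segment ℝ y w ∩ frontier S).Nonempty
  · obtain ⟨f, hfseg, hfS⟩ := hf
    obtain ⟨a, b, ha, hb, hab, hfab⟩ := hfseg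
    refine ⟨b, hb, by linarith, ?_⟩
    have ha' : a = 1 - b := by linarith
    subst ha'
    have : y + b • (w - y) = (1 - b) • y + b • w := by module
    rw [this, hfab]; exact hfS
  · exfalso
    have hpc : IsPreconnected (segment ℝ y w) := (convex_segment y w).isPreconnected
    have hcover : segment ℝ y w ⊆ interior S ∪ (closure S)ᶜ := by
      intro p hp
      by_cases h1 : p ∈ interior S
      · exact Or.inl h1
      by_cases h2 : p ∈ closure S
      · exact absurd ⟨p, hp, h2, h1⟩ hf
      · exact Or.inr h2
    obtain ⟨p, _, hp1, hp2⟩ := hpc (interior S) (closure S)ᶜ isOpen_interior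
      isClosed_closure.isOpen_compl hcover
      ⟨y, left_mem_segment ℝ y w, hy⟩
      ⟨w, right_mem_segment ℝ y w, fun h => hw (hS.closure_eq ▸ h)⟩
    exact hp2 (subset_closure (interior_subset hp1))

lemma mem_of_sq_le {S : Set E} (hS : IsClosed S) {y : E} (hy : y ∈ interior S)
    {D : ℝ} (hD0 : 0 < D) (hD : ∀ f ∈ frontier S, D ≤ ‖f - y‖ ^ 2)
    {p : E} (hp : ‖p - y‖ ^ 2 ≤ D) : p ∈ S := by
  by_contra hpS
  obtain ⟨b, hb0, hb1, hbf⟩ := seg_crossing hS hy hpS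
  have h1 : D ≤ ‖y + b • (p - y) - y‖ ^ 2 := hD _ hbf
  have h2 : ‖y + b • (p - y) - y‖ = b * ‖p - y‖ := by
    rw [add_sub_cancel_left, norm_smul, Real.norm_eq_abs, abs_of_nonneg hb0]
  rw [h2, mul_pow] at h1
  have h3 : D ≤ b ^ 2 * D := le_trans h1 (mul_le_mul_of_nonneg_left hp (sq_nonneg b))
  have h4 : 1 ≤ b := by nlinarith [mul_le_mul_of_nonneg_left hb1 hb0]
  have hb : b = 1 := le_antisymm hb1 h4
  subst hb
  have : y + (1 : ℝ) • (p - y) = p := by module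
  rw [this] at hbf
  exact hpS (hS.frontier_subset hbf)

lemma exists_index_weights {n : ℕ} [Nonempty (Fin n)] (x : Fin n → E) (I : Finset (Fin n)) {ζ : E}
    (hζ : ζ ∈ convexHull ℝ (x '' (I : Set (Fin n)))) :
    ∃ v : Fin n → ℝ, (∀ i, 0 ≤ v i) ∧ ∑ i, v i = 1 ∧ ∑ i, v i • x i = ζ ∧ ∀ i ∉ I, v i = 0 := by
  classical
  rw [show x '' (I : Set (Fin n)) = ((I.image x : Finset E) : Set E) by
    rw [Finset.coe_image]] at hζ
  obtain ⟨w, hw0, hw1, hwc⟩ := Finset.mem_convexHull'.mp hζ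
  have hsel : ∀ p ∈ I.image x, ∃ j, j ∈ I ∧ x j = p := by
    intro p hp
    obtain ⟨j, hj, hjp⟩ := Finset.mem_image.mp hp
    exact ⟨j, hj, hjp⟩
  choose! g hgI hgx using hsel
  refine ⟨fun i => ∑ p ∈ (I.image x).filter (fun p => g p = i), w p, ?_, ?_, ?_, ?_⟩
  · intro i
    exact Finset.sum_nonneg fun p hp => hw0 p (Finset.mem_of_mem_filter p hp)
  · rw [Finset.sum_fiberwise_of_maps_to (fun p _ => Finset.mem_univ (g p)) w]
    exact hw1
  · have : ∀ i ∈ (Finset.univ : Finset (Fin n)),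
        (∑ p ∈ (I.image x).filter (fun p => g p = i), w p) • x i
        = ∑ p ∈ (I.image x).filter (fun p => g p = i), w p • p := by
      intro i _
      rw [Finset.sum_smul]
      refine Finset.sum_congr rfl fun p hp => ?_
      obtain ⟨hpI, hgp⟩ := Finset.mem_filter.mp hp
      rw [← hgp, hgx p hpI]
    rw [Finset.sum_congr rfl this,
      Finset.sum_fiberwise_of_maps_to (fun p _ => Finset.mem_univ (g p)) (fun p => w p • p)]
    exact hwc
  · intro i hi
    refine Finset.sum_eq_zero fun p hp => ?_
    obtain ⟨hpI, hgp⟩ := Finset.mem_filter.mp hp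
    exact absurd (hgp ▸ hgI p hpI) hi

lemma exists_vertex_ge {n : ℕ} {x : Fin n → E} {I : Finset (Fin n)} {ζ : E}
    (hζ : ζ ∈ convexHull ℝ (x '' (I : Set (Fin n)))) (u : E) :
    ∃ j ∈ I, ⟪ζ, u⟫ ≤ ⟪x j, u⟫ := by
  classical
  have himg : (x '' (I : Set (Fin n))).Nonempty := convexHull_nonempty_iff.mp ⟨ζ, hζ⟩
  have hne' : (I.image x).Nonempty := by
    rw [← Finset.coe_nonempty, Finset.coe_image]; exact himg
  have hlin : IsLinearMap ℝ (fun v : E => ⟪v, u⟫) :=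
    ⟨fun a b => inner_add_left a b u, fun r a => by simp [real_inner_smul_left]⟩
  have hsub : convexHull ℝ (x '' (I : Set (Fin n))) ⊆
      {v : E | ⟪v, u⟫ ≤ (I.image x).sup' hne' (fun p => ⟪p, u⟫)} := by
    apply convexHull_min
    · rintro p ⟨j, hj, rfl⟩
      exact Finset.le_sup' (fun p => ⟪p, u⟫) (Finset.mem_image_of_mem x hj)
    · exact convex_halfSpace_le hlin _
  obtain ⟨p, hpmem, hpM⟩ := Finset.exists_mem_eq_sup' hne' (fun p => ⟪p, u⟫)
  obtain ⟨j, hj, rfl⟩ := Finset.mem_image.mp hpmem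
  refine ⟨j, hj, ?_⟩
  have := hsub hζ
  rw [Set.mem_setOf_eq, hpM] at this
  exact this

lemma sum_norm_sq_eq {n : ℕ} (x : Fin n → E) (y c : E) {w : Fin n → ℝ} (hw : ∑ i, w i = 1) :
    ∑ i, w i * ‖x i - y‖ ^ 2 =
      ∑ i, w i * ‖x i - c‖ ^ 2 + 2 * ⟪(∑ i, w i • x i) - c, c - y⟫ + ‖c - y‖ ^ 2 := by
  have hpt : ∀ i, ‖x i - y‖ ^ 2 = ‖x i - c‖ ^ 2 + 2 * ⟪x i - c, c - y⟫ + ‖c - y‖ ^ 2 := by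
    intro i
    have h : x i - y = (x i - c) + (c - y) := by abel
    rw [h, norm_add_sq_real]
  have hz : ∑ i, w i • (x i - c) = (∑ i, w i • x i) - c := by
    simp_rw [smul_sub]
    rw [Finset.sum_sub_distrib, ← Finset.sum_smul, hw, one_smul]
  have hinner : ⟪(∑ i, w i • x i) - c, c - y⟫ = ∑ i, w i * ⟪x i - c, c - y⟫ := by
    rw [← hz, sum_inner]
    exact Finset.sum_congr rfl fun i _ => real_inner_smul_left _ _ _
  calc ∑ i, w i * ‖x i - y‖ ^ 2
      = ∑ i, (w i * ‖x i - c‖ ^ 2 + 2 * (w i * ⟪x i - c, c - y⟫) + w i * ‖c - y‖ ^ 2) := by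
        refine Finset.sum_congr rfl fun i _ => ?_
        rw [hpt i]; ring
    _ = ∑ i, w i * ‖x i - c‖ ^ 2 + 2 * ∑ i, w i * ⟪x i - c, c - y⟫
        + (∑ i, w i) * ‖c - y‖ ^ 2 := by
        rw [Finset.sum_add_distrib, Finset.sum_add_distrib, ← Finset.mul_sum, ← Finset.sum_mul]
    _ = _ := by rw [hw, one_mul, hinner]

end Helpers
set_option maxHeartbeats 2000000 in
theorem stmt11 {d n : ℕ} (x : Fin n → EuclideanSpace ℝ (Fin d))
    (y : EuclideanSpace ℝ (Fin d))
    (hne : (Finset.univ : Finset (Fin n)).Nonempty)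
    (c : EuclideanSpace ℝ (Fin d)) (R : ℝ) (hR : 0 < R)
    (I : Finset (Fin n)) (hcard : I.card ≤ d + 1)
    (hI : ∀ j ∈ I, ‖x j - c‖ = R) (hI' : ∀ j ∉ I, R < ‖x j - c‖)
    (hy : y ∈ interior (convexHull ℝ (x '' (I : Set (Fin n)))))
    (ρ : ℝ) (hρ : 0 < ρ)
    (hC : 0 < Finset.univ.sup' hne (fun i => ‖x i - y‖ ^ 2)
            - Finset.univ.inf' hne (fun i => ‖x i - y‖ ^ 2))
    (hρ' : ρ < sInf ((fun z => ‖z - y‖ ^ 2) ''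
              frontier (convexHull ℝ (x '' (I : Set (Fin n))))) /
            (Finset.univ.sup' hne (fun i => ‖x i - y‖ ^ 2)
              - Finset.univ.inf' hne (fun i => ‖x i - y‖ ^ 2)))
    (wρ : Fin n → ℝ) (hwρ : ∀ i, 0 ≤ wρ i) (hwρ1 : ∑ i, wρ i = 1)
    (hmin : ∀ v : Fin n → ℝ, (∀ i, 0 ≤ v i) → ∑ i, v i = 1 →
      (1 / 2) * ‖(∑ i, wρ i • x i) - y‖ ^ 2 + ρ * ∑ i, wρ i * ‖x i - y‖ ^ 2 ≤
      (1 / 2) * ‖(∑ i, v i • x i) - y‖ ^ 2 + ρ * ∑ i, v i * ‖x i - y‖ ^ 2) :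
    ∀ i ∉ I, wρ i = 0 := by
  classical
  have hnefin : Nonempty (Fin n) := ⟨hne.choose⟩
  intro i₀ hi₀
  by_contra hne0
  have hw0 : 0 < wρ i₀ := lt_of_le_of_ne (hwρ i₀) (Ne.symm hne0)
  obtain ⟨S, hSdef⟩ : ∃ S, S = convexHull ℝ (x '' (I : Set (Fin n))) := ⟨_, rfl⟩
  obtain ⟨C, hCdef⟩ : ∃ C, C = Finset.univ.sup' hne (fun i => ‖x i - y‖ ^ 2)
      - Finset.univ.inf' hne (fun i => ‖x i - y‖ ^ 2) := ⟨_, rfl⟩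
  obtain ⟨D, hDdef⟩ : ∃ D, D = sInf ((fun z => ‖z - y‖ ^ 2) '' frontier S) := ⟨_, rfl⟩
  have hC0 : 0 < C := hCdef ▸ hC
  have hρC : ρ * C < D := by
    rw [hDdef, hSdef]
    refine (lt_div_iff₀ hC0).mp ?_
    rw [hCdef]
    exact hρ'
  have hD0 : 0 < D := lt_trans (mul_pos hρ hC0) hρC
  have hSclosed : IsClosed S := by
    rw [hSdef]
    exact (Set.Finite.isCompact_convexHull ℝ ((I.finite_toSet).image x)).isClosed
  have hyS : y ∈ interior S := by rw [hSdef]; exact hy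
  have hD : ∀ f ∈ frontier S, D ≤ ‖f - y‖ ^ 2 := by
    intro f hf
    rw [hDdef]
    refine csInf_le ⟨0, ?_⟩ ⟨f, hf, rfl⟩
    rintro a ⟨p, _, rfl⟩
    positivity
  have hmem : ∀ p : EuclideanSpace ℝ (Fin d), ‖p - y‖ ^ 2 ≤ D → p ∈ S :=
    fun p hp => mem_of_sq_le hSclosed hyS hD0 hD hp
  have hout : ∀ p : EuclideanSpace ℝ (Fin d), p ∉ S → D < ‖p - y‖ ^ 2 :=
    fun p hp => lt_of_not_ge fun h => hp (hmem p h)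
  obtain ⟨z, hzdef⟩ : ∃ z, z = ∑ i, wρ i • x i := ⟨_, rfl⟩
  obtain ⟨P, hPdef⟩ : ∃ P, P = (⟪z - y, c - y⟫ : ℝ) := ⟨_, rfl⟩
  obtain ⟨Ew, hEdef⟩ : ∃ Ew, Ew = ∑ i, wρ i * (‖x i - c‖ ^ 2 - R ^ 2) := ⟨_, rfl⟩
  have hE0 : 0 < Ew := by
    have hterm : ∀ i, 0 ≤ wρ i * (‖x i - c‖ ^ 2 - R ^ 2) := by
      intro i
      by_cases hiI : i ∈ I
      · rw [hI i hiI]; simp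
      · exact mul_nonneg (hwρ i) (by nlinarith only [hI' i hiI, hR])
    have h1 : wρ i₀ * (‖x i₀ - c‖ ^ 2 - R ^ 2) ≤ Ew := by
      rw [hEdef]
      exact Finset.single_le_sum (fun i _ => hterm i) (Finset.mem_univ i₀)
    have h2 : 0 < wρ i₀ * (‖x i₀ - c‖ ^ 2 - R ^ 2) :=
      mul_pos hw0 (by nlinarith only [hI' i₀ hi₀, hR])
    linarith only [h1, h2]
  have hAw : ∑ i, wρ i * ‖x i - y‖ ^ 2
      = (Ew + R ^ 2) + 2 * (⟪z - c, c - y⟫ : ℝ) + ‖c - y‖ ^ 2 := by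
    rw [sum_norm_sq_eq x y c hwρ1, ← hzdef]
    have h : ∑ i, wρ i * ‖x i - c‖ ^ 2 = Ew + R ^ 2 := by
      rw [hEdef]
      simp_rw [mul_sub]
      rw [Finset.sum_sub_distrib, ← Finset.sum_mul, hwρ1, one_mul]
      ring
    rw [h]
  -- the key optimality inequality
  have star : ∀ ζ : EuclideanSpace ℝ (Fin d), ζ ∈ S →
      ‖z - y‖ ^ 2 / 2 + ρ * Ew ≤ ‖ζ - y‖ ^ 2 / 2 + 2 * ρ * (⟪ζ - z, c - y⟫ : ℝ) := by
    intro ζ hζ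
    rw [hSdef] at hζ
    obtain ⟨v, hv0, hv1, hvx, hvI⟩ := exists_index_weights x I hζ
    have hBv : ∑ i, v i * ‖x i - y‖ ^ 2 = R ^ 2 + 2 * (⟪ζ - c, c - y⟫ : ℝ) + ‖c - y‖ ^ 2 := by
      rw [sum_norm_sq_eq x y c hv1, hvx]
      have h : ∑ i, v i * ‖x i - c‖ ^ 2 = R ^ 2 := by
        have h2 : ∑ i, v i * ‖x i - c‖ ^ 2 = ∑ i, v i * R ^ 2 := by
          refine Finset.sum_congr rfl fun i _ => ?_
          by_cases hiI : i ∈ I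
          · rw [hI i hiI]
          · rw [hvI i hiI]; ring
        rw [h2, ← Finset.sum_mul, hv1, one_mul]
      rw [h]
    have h := hmin v hv0 hv1
    rw [hvx, ← hzdef, hAw, hBv] at h
    have hsplit : (⟪ζ - z, c - y⟫ : ℝ) = (⟪ζ - c, c - y⟫ : ℝ) - (⟪z - c, c - y⟫ : ℝ) := by
      rw [← inner_sub_left]
      congr 1
      abel
    rw [hsplit]
    linarith only [h]
  by_cases hzS : z ∈ S
  · have h := star z hzS
    have hzz : (⟪z - z, c - y⟫ : ℝ) = 0 := by rw [sub_self, inner_zero_left]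
    rw [hzz] at h
    linarith only [h, mul_pos hρ hE0]
  · have hq2' : D < ‖z - y‖ ^ 2 := hout z hzS
    obtain ⟨q, hqdef⟩ : ∃ q, q = ‖z - y‖ := ⟨_, rfl⟩
    have hq2 : D < q ^ 2 := by rw [hqdef]; exact hq2'
    have hqnn : 0 ≤ q := by rw [hqdef]; positivity
    obtain ⟨r, hrdef⟩ : ∃ r, r = Real.sqrt D := ⟨_, rfl⟩
    have hr0 : 0 < r := hrdef ▸ Real.sqrt_pos.mpr hD0
    have hr2 : r ^ 2 = D := hrdef ▸ Real.sq_sqrt hD0.le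
    have hrq : r < q := lt_of_pow_lt_pow_left₀ 2 hqnn (by rw [hr2]; exact hq2)
    have hq0 : 0 < q := hr0.trans hrq
    obtain ⟨t, htdef⟩ : ∃ t : ℝ, t = r / q := ⟨_, rfl⟩
    have ht0 : 0 < t := htdef ▸ div_pos hr0 hq0
    have ht1 : t < 1 := htdef ▸ (div_lt_one hq0).mpr hrq
    have htq : t * q = r := by rw [htdef]; exact div_mul_cancel₀ r hq0.ne'
    have htq2 : t ^ 2 * q ^ 2 = D := by rw [← hr2, ← htq]; ring
    have hnorm : ∀ s : ℝ, ‖(y + s • (z - y)) - y‖ ^ 2 = s ^ 2 * q ^ 2 := by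
      intro s
      rw [add_sub_cancel_left, norm_smul, Real.norm_eq_abs, mul_pow, sq_abs, hqdef]
    have hDle : ∀ s : ℝ, s ^ 2 = t ^ 2 → ‖(y + s • (z - y)) - y‖ ^ 2 ≤ D := by
      intro s hs
      rw [hnorm s, hs]
      exact le_of_eq htq2
    have hζmem : (y + t • (z - y)) ∈ S := hmem _ (hDle t rfl)
    have hζ'mem : (y + (-t) • (z - y)) ∈ S := hmem _ (hDle (-t) (by ring))
    have h1 := star _ hζmem
    have e1 : ‖(y + t • (z - y)) - y‖ ^ 2 = D := by
      rw [hnorm t]; exact htq2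
    have e2 : (⟪(y + t • (z - y)) - z, c - y⟫ : ℝ) = (t - 1) * P := by
      have h : (y + t • (z - y)) - z = (t - 1) • (z - y) := by module
      rw [h, real_inner_smul_left, ← hPdef]
    rw [e1, e2, ← hqdef] at h1
    -- h1 : q^2/2 + ρ*Ew ≤ D/2 + 2*ρ*((t-1)*P)
    obtain ⟨j₁, hj₁I, hj₁⟩ := exists_vertex_ge (hSdef ▸ hζ'mem) (c - y)
    obtain ⟨j₂, hj₂I, hj₂⟩ := exists_vertex_ge (hSdef ▸ interior_subset hyS) (-(c - y))
    have hj₂' : (⟪x j₂, c - y⟫ : ℝ) ≤ (⟪y, c - y⟫ : ℝ) := by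
      rw [inner_neg_right, inner_neg_right] at hj₂
      linarith
    have hζ'in : (⟪y + (-t) • (z - y), c - y⟫ : ℝ) = (⟪y, c - y⟫ : ℝ) - t * P := by
      rw [inner_add_left, real_inner_smul_left, ← hPdef]
      ring
    have hj₁' : (⟪y, c - y⟫ : ℝ) - t * P ≤ (⟪x j₁, c - y⟫ : ℝ) := by
      rw [← hζ'in]; exact hj₁
    have hvert : ∀ j ∈ I, ‖x j - y‖ ^ 2 = R ^ 2 + 2 * (⟪x j - c, c - y⟫ : ℝ) + ‖c - y‖ ^ 2 := by
      intro j hj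
      have h : x j - y = (x j - c) + (c - y) := by abel
      rw [h, norm_add_sq_real, hI j hj]
    have hCP : -(2 * (t * P)) ≤ C := by
      have hs : ‖x j₁ - y‖ ^ 2 ≤ Finset.univ.sup' hne (fun i => ‖x i - y‖ ^ 2) :=
        Finset.le_sup' (fun i => ‖x i - y‖ ^ 2) (Finset.mem_univ j₁)
      have hi : Finset.univ.inf' hne (fun i => ‖x i - y‖ ^ 2) ≤ ‖x j₂ - y‖ ^ 2 :=
        Finset.inf'_le (fun i => ‖x i - y‖ ^ 2) (Finset.mem_univ j₂)
      have e₁ := hvert j₁ hj₁I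
      have e₂ := hvert j₂ hj₂I
      have hin₁ : (⟪x j₁ - c, c - y⟫ : ℝ) = (⟪x j₁, c - y⟫ : ℝ) - (⟪c, c - y⟫ : ℝ) :=
        inner_sub_left _ _ _
      have hin₂ : (⟪x j₂ - c, c - y⟫ : ℝ) = (⟪x j₂, c - y⟫ : ℝ) - (⟪c, c - y⟫ : ℝ) :=
        inner_sub_left _ _ _
      rw [hCdef]
      rw [hin₁] at e₁
      rw [hin₂] at e₂
      linarith only [hs, hi, e₁, e₂, hj₁', hj₂']
    -- final arithmetic
    have hd : 0 < q - r := sub_pos.mpr hrq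
    have ht' : t - 1 = (r - q) / q := by
      rw [htdef]
      field_simp
    have h2 : (q ^ 2 - r ^ 2) / 2 < 2 * ρ * (((r - q) / q) * P) := by
      rw [← ht', hr2]
      linarith only [h1, mul_pos hρ hE0]
    have h3 : q * ((q ^ 2 - r ^ 2) / 2) < q * (2 * ρ * (((r - q) / q) * P)) :=
      mul_lt_mul_of_pos_left h2 hq0
    have h3' : q * (2 * ρ * (((r - q) / q) * P)) = 2 * ρ * ((r - q) * P) := by
      field_simp
    rw [h3'] at h3
    have h4 : (q - r) * (q * (q + r) / 2 + 2 * ρ * P) < 0 := by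
      have hid : (q - r) * (q * (q + r) / 2 + 2 * ρ * P)
          = q * ((q ^ 2 - r ^ 2) / 2) - 2 * ρ * ((r - q) * P) := by ring
      rw [hid]
      linarith only [h3]
    have h5 : q * (q + r) / 2 + 2 * ρ * P < 0 := by
      by_contra hcon
      push_neg at hcon
      exact absurd h4 (not_lt.mpr (mul_nonneg hd.le hcon))
    have h6 : -(2 * (r * P)) ≤ q * C := by
      have h := mul_le_mul_of_nonneg_left hCP hqnn
      have hrw : q * -(2 * (t * P)) = -(2 * (r * P)) := by
        rw [← htq]; ring
      rw [hrw] at h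
      exact h
    have f1 : r * (q * (q + r)) < r * (-(4 * ρ * P)) := by
      have h := mul_lt_mul_of_pos_left h5 hr0
      linarith only [h]
    have f3 : 2 * ρ * (-(2 * (r * P))) ≤ 2 * ρ * (q * C) :=
      mul_le_mul_of_nonneg_left h6 (by positivity)
    have f5 : 2 * q * (ρ * C) < 2 * q * D :=
      mul_lt_mul_of_pos_left hρC (by positivity)
    have f7 : 2 * q * r ^ 2 ≤ r * (q * (q + r)) := by
      linarith only [mul_pos (mul_pos hr0 hq0) hd]
    have f8 : 2 * q * r ^ 2 = 2 * q * D := by rw [hr2]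
    linarith only [f1, f3, f5, f7, f8]
end

section
/- Let x_1,...,x_n ∈ ℝ^d and y in the convex hull of {x_i}. For each ρ > 0 let w_ρ be a minimizer over Δ^n of (1/2)‖Σ_i w_i x_i − y‖² + ρ Σ_i w_i‖x_i − y‖². Then ‖Σ_i (w_ρ)_i x_i − y‖ → 0 as ρ → 0⁺, with rate ‖Σ_i (w_ρ)_i x_i − y‖ ≤ √(ρ C) for C = max_i‖x_i − y‖² − min_i‖x_i − y‖². -/
open scoped BigOperators

theorem stmt12 {d n : ℕ} (x : Fin n → EuclideanSpace ℝ (Fin d))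
    (y : EuclideanSpace ℝ (Fin d))
    (hne : (Finset.univ : Finset (Fin n)).Nonempty)
    (hy : y ∈ convexHull ℝ (Set.range x))
    (w : ℝ → Fin n → ℝ)
    (hw : ∀ ρ : ℝ, 0 < ρ → (∀ i, 0 ≤ w ρ i) ∧ ∑ i, w ρ i = 1)
    (hmin : ∀ ρ : ℝ, 0 < ρ → ∀ v : Fin n → ℝ, (∀ i, 0 ≤ v i) → ∑ i, v i = 1 →
      (1 / 2) * ‖(∑ i, w ρ i • x i) - y‖ ^ 2 + ρ * ∑ i, w ρ i * ‖x i - y‖ ^ 2 ≤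
      (1 / 2) * ‖(∑ i, v i • x i) - y‖ ^ 2 + ρ * ∑ i, v i * ‖x i - y‖ ^ 2) :
    (∀ ρ : ℝ, 0 < ρ →
      ‖(∑ i, w ρ i • x i) - y‖ ≤
        Real.sqrt (ρ * (Finset.univ.sup' hne (fun i => ‖x i - y‖ ^ 2)
          - Finset.univ.inf' hne (fun i => ‖x i - y‖ ^ 2)))) ∧
    Filter.Tendsto (fun ρ : ℝ => ‖(∑ i, w ρ i • x i) - y‖)
      (nhdsWithin 0 (Set.Ioi 0)) (nhds 0) := by
  classical
  -- Extract a convex representation of y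
  rw [convexHull_range_eq_exists_affineCombination] at hy
  obtain ⟨s, u₀, hu₀, hu₁, hu₂⟩ := hy
  set u : Fin n → ℝ := fun i => if i ∈ s then u₀ i else 0 with hu_def
  have hus : ∑ i, u i = 1 := by
    rw [Finset.sum_ite_mem, Finset.univ_inter, hu₁]
  have hunn : ∀ i, 0 ≤ u i := by
    intro i; simp only [hu_def]
    split
    · exact hu₀ i ‹_›
    · exact le_refl 0
  have huy : ∑ i, u i • x i = y := by
    have hterm : ∀ i, u i • x i = if i ∈ s then u₀ i • x i else 0 := by
      intro i; simp only [hu_def]; split <;> simp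
    rw [← hu₂, Finset.affineCombination_eq_linear_combination s x u₀ hu₁]
    simp only [hterm]
    rw [Finset.sum_ite_mem, Finset.univ_inter]
  set C : ℝ := Finset.univ.sup' hne (fun i => ‖x i - y‖ ^ 2)
          - Finset.univ.inf' hne (fun i => ‖x i - y‖ ^ 2) with hC
  have hCnn : 0 ≤ C := by
    rw [hC, sub_nonneg]
    obtain ⟨j, hj⟩ := hne
    exact le_trans (Finset.inf'_le _ (Finset.mem_univ j))
      (Finset.le_sup' (fun i => ‖x i - y‖ ^ 2) (Finset.mem_univ j))
  -- Key bound: ‖X w ρ - y‖² ≤ ρ C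
  have key : ∀ ρ : ℝ, 0 < ρ → ‖(∑ i, w ρ i • x i) - y‖ ^ 2 ≤ ρ * C := by
    intro ρ hρ
    obtain ⟨hwnn, hws⟩ := hw ρ hρ
    set A : ℝ := ‖(∑ i, w ρ i • x i) - y‖ ^ 2 with hA
    have hAnn : 0 ≤ A := sq_nonneg _
    set Sw : ℝ := ∑ i, w ρ i * ‖x i - y‖ ^ 2 with hSw
    set Su : ℝ := ∑ i, u i * ‖x i - y‖ ^ 2 with hSu
    -- step: ∀ t ∈ (0,1], A * (2 - t) / 2 ≤ ρ * (Su - Sw)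
    have step : ∀ t : ℝ, 0 < t → t ≤ 1 → A * (2 - t) / 2 ≤ ρ * (Su - Sw) := by
      intro t ht ht1
      set v : Fin n → ℝ := fun i => (1 - t) * w ρ i + t * u i with hv
      have hvnn : ∀ i, 0 ≤ v i := fun i =>
        add_nonneg (mul_nonneg (by linarith) (hwnn i)) (mul_nonneg ht.le (hunn i))
      have hvs : ∑ i, v i = 1 := by
        simp only [hv, Finset.sum_add_distrib, ← Finset.mul_sum, hws, hus]; ring
      have hvx : (∑ i, v i • x i) - y = (1 - t) • ((∑ i, w ρ i • x i) - y) := by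
        have : (∑ i, v i • x i) = (1 - t) • (∑ i, w ρ i • x i) + t • y := by
          rw [← huy]
          simp only [hv, add_smul, Finset.sum_add_distrib, Finset.smul_sum, mul_smul]
        rw [this, smul_sub]
        have : (t : ℝ) • y = y - (1 - t) • y := by
          rw [sub_smul, one_smul]; abel
        rw [this]; abel
      have hvS : ∑ i, v i * ‖x i - y‖ ^ 2 = (1 - t) * Sw + t * Su := by
        simp only [hv, hSw, hSu, Finset.mul_sum, Finset.sum_add_distrib, add_mul, mul_assoc]
      have h := hmin ρ hρ v hvnn hvs
      rw [hvx, hvS, norm_smul, mul_pow, Real.norm_eq_abs, sq_abs] at h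
      rw [← hA, ← hSw] at h
      -- h : 1/2 A + ρ Sw ≤ 1/2 (1-t)² A + ρ((1-t)Sw + t Su)
      have h2 : t * (A * (2 - t) / 2) ≤ t * (ρ * (Su - Sw)) := by nlinarith [h]
      exact (mul_le_mul_iff_right₀ ht).mp h2
    -- previous step implies A ≤ ρ (Su - Sw)
    have hB : A ≤ ρ * (Su - Sw) := by
      by_contra hcon
      push_neg at hcon
      have hApos : 0 < A := by
        have := step 1 one_pos le_rfl
        nlinarith
      set t : ℝ := min 1 ((A - ρ * (Su - Sw)) / A) with htdef
      have ht : 0 < t := lt_min one_pos (div_pos (by linarith) hApos)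
      have ht1 : t ≤ 1 := min_le_left _ _
      have h2 := step t ht ht1
      have h3 : t * A ≤ A - ρ * (Su - Sw) := by
        calc t * A ≤ ((A - ρ * (Su - Sw)) / A) * A :=
              mul_le_mul_of_nonneg_right (min_le_right _ _) hApos.le
          _ = A - ρ * (Su - Sw) := by field_simp
      nlinarith
    -- Su ≤ sup, Sw ≥ inf
    have hSu_le : Su ≤ Finset.univ.sup' hne (fun i => ‖x i - y‖ ^ 2) := by
      calc Su ≤ ∑ i, u i * Finset.univ.sup' hne (fun i => ‖x i - y‖ ^ 2) := by
              apply Finset.sum_le_sum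
              intro i _
              exact mul_le_mul_of_nonneg_left
                (Finset.le_sup' (fun i => ‖x i - y‖ ^ 2) (Finset.mem_univ i)) (hunn i)
        _ = _ := by rw [← Finset.sum_mul, hus, one_mul]
    have hSw_ge : Finset.univ.inf' hne (fun i => ‖x i - y‖ ^ 2) ≤ Sw := by
      calc Finset.univ.inf' hne (fun i => ‖x i - y‖ ^ 2)
            = ∑ i, w ρ i * Finset.univ.inf' hne (fun i => ‖x i - y‖ ^ 2) := by
              rw [← Finset.sum_mul, hws, one_mul]
        _ ≤ Sw := by
              apply Finset.sum_le_sum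
              intro i _
              exact mul_le_mul_of_nonneg_left
                (Finset.inf'_le (fun i => ‖x i - y‖ ^ 2) (Finset.mem_univ i)) (hwnn i)
    calc A ≤ ρ * (Su - Sw) := hB
      _ ≤ ρ * C := by
          apply mul_le_mul_of_nonneg_left _ hρ.le
          rw [hC]; linarith
  constructor
  · intro ρ hρ
    have := key ρ hρ
    calc ‖(∑ i, w ρ i • x i) - y‖
        = Real.sqrt (‖(∑ i, w ρ i • x i) - y‖ ^ 2) := by
          rw [Real.sqrt_sq (norm_nonneg _)]
      _ ≤ Real.sqrt (ρ * C) := Real.sqrt_le_sqrt this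
  · -- squeeze
    have h1 : Filter.Tendsto (fun ρ : ℝ => Real.sqrt (ρ * C))
        (nhdsWithin 0 (Set.Ioi 0)) (nhds 0) := by
      have : Filter.Tendsto (fun ρ : ℝ => Real.sqrt (ρ * C)) (nhds 0)
          (nhds (Real.sqrt (0 * C))) := by
        apply Continuous.tendsto
        exact Real.continuous_sqrt.comp (continuous_id.mul continuous_const)
      rw [zero_mul, Real.sqrt_zero] at this
      exact this.mono_left nhdsWithin_le_nhds
    apply tendsto_of_tendsto_of_tendsto_of_le_of_le' tendsto_const_nhds h1
    · filter_upwards with ρ using norm_nonneg _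
    · filter_upwards [self_mem_nhdsWithin] with ρ hρ
      have hρ' : (0:ℝ) < ρ := hρ
      have := key ρ hρ'
      calc ‖(∑ i, w ρ i • x i) - y‖
          = Real.sqrt (‖(∑ i, w ρ i • x i) - y‖ ^ 2) := by
            rw [Real.sqrt_sq (norm_nonneg _)]
        _ ≤ Real.sqrt (ρ * C) := Real.sqrt_le_sqrt this
end

section
/- Let x_1,...,x_n ∈ ℝ^d with n ≥ 1 and y ∈ ℝ^d. Suppose index j satisfies ‖x_j − y‖ < ‖x_i − y‖ for all i ≠ j. Then there exists P > 0 such that for all ρ ≥ P, the standard basis vector e_j (the weight vector selecting the nearest neighbor x_j) is the unique minimizer over Δ^n of F_ρ(w) = (1/2)‖Σ_i w_i x_i − y‖² + ρ Σ_i w_i‖x_i − y‖². -/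
open scoped BigOperators

theorem stmt19 {d n : ℕ} (x : Fin n → EuclideanSpace ℝ (Fin d))
    (y : EuclideanSpace ℝ (Fin d)) (j : Fin n)
    (hj : ∀ i, i ≠ j → ‖x j - y‖ < ‖x i - y‖) :
    ∃ P : ℝ, 0 < P ∧ ∀ ρ : ℝ, P ≤ ρ →
      ∀ w : Fin n → ℝ, (∀ i, 0 ≤ w i) → ∑ i, w i = 1 → w ≠ Pi.single j 1 →
        (1 / 2) * ‖(∑ i, (Pi.single j 1 : Fin n → ℝ) i • x i) - y‖ ^ 2 +
            ρ * ∑ i, (Pi.single j 1 : Fin n → ℝ) i * ‖x i - y‖ ^ 2 <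
        (1 / 2) * ‖(∑ i, w i • x i) - y‖ ^ 2 + ρ * ∑ i, w i * ‖x i - y‖ ^ 2 := by
  classical
  have hsum1 : (∑ i, (Pi.single j 1 : Fin n → ℝ) i • x i) = x j := by
    rw [Finset.sum_eq_single j]
    · simp
    · intro i _ hij; simp [Pi.single_apply, hij]
    · simp
  have hsum2 : (∑ i, (Pi.single j 1 : Fin n → ℝ) i * ‖x i - y‖ ^ 2) = ‖x j - y‖ ^ 2 := by
    rw [Finset.sum_eq_single j]
    · simp
    · intro i _ hij; simp [Pi.single_apply, hij]
    · simp
  by_cases hn : ∃ i : Fin n, i ≠ j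
  case neg =>
    push_neg at hn
    refine ⟨1, one_pos, fun ρ _ w hw0 hw1 hwne => ?_⟩
    exfalso; apply hwne
    have hwj : w j = 1 := by
      rw [← hw1, Finset.sum_eq_single j]
      · intro i _ hij; exact absurd (hn i) hij
      · simp
    funext i
    have hi : i = j := hn i
    subst hi
    simp [Pi.single_apply, hwj]
  case pos =>
    obtain ⟨i0, hi0⟩ := hn
    set S : Finset (Fin n) := Finset.univ.erase j with hS_def
    have hS : S.Nonempty := ⟨i0, Finset.mem_erase.2 ⟨hi0, Finset.mem_univ _⟩⟩
    set δ : ℝ := S.inf' hS (fun i => ‖x i - y‖ ^ 2 - ‖x j - y‖ ^ 2) with hδ_def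
    have hδpos : 0 < δ := by
      rw [hδ_def, Finset.lt_inf'_iff]
      intro i hi
      have hij : i ≠ j := (Finset.mem_erase.1 hi).1
      have h := hj i hij
      have h2 : ‖x j - y‖ ^ 2 < ‖x i - y‖ ^ 2 :=
        pow_lt_pow_left₀ h (norm_nonneg _) two_ne_zero
      linarith
    set M : ℝ := Finset.univ.sup' ⟨j, Finset.mem_univ j⟩ (fun i => ‖x j - x i‖) with hM_def
    have hMi : ∀ i, ‖x j - x i‖ ≤ M := fun i =>
      Finset.le_sup' (fun i => ‖x j - x i‖) (Finset.mem_univ i)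
    have hM0 : 0 ≤ M := le_trans (by simp) (hMi j)
    set r : ℝ := ‖x j - y‖ with hr_def
    have hr0 : 0 ≤ r := norm_nonneg _
    have hrM : 0 ≤ r * M := mul_nonneg hr0 hM0
    refine ⟨(r * M + 1) / δ, div_pos (by linarith) hδpos, fun ρ hρ w hw0 hw1 hwne => ?_⟩
    have hρδ : r * M + 1 ≤ ρ * δ := by
      rw [div_le_iff₀ hδpos] at hρ; linarith
    have hρ0 : 0 ≤ ρ := le_trans (le_of_lt (div_pos (by linarith) hδpos)) hρ
    set s : ℝ := ∑ i ∈ S, w i with hs_def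
    have hs0 : 0 ≤ s := Finset.sum_nonneg fun i _ => hw0 i
    have hwj : w j + s = 1 := by
      rw [hs_def, Finset.add_sum_erase _ w (Finset.mem_univ j)]; exact hw1
    have hspos : 0 < s := by
      rcases hs0.lt_or_eq with h | h
      · exact h
      · exfalso; apply hwne
        have hz : ∀ i ∈ S, w i = 0 :=
          (Finset.sum_eq_zero_iff_of_nonneg fun i _ => hw0 i).1 h.symm
        funext i
        by_cases hij : i = j
        · subst hij; simp [Pi.single_apply]; linarith
        · rw [Pi.single_apply, if_neg hij]
          exact hz i (Finset.mem_erase.2 ⟨hij, Finset.mem_univ _⟩)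
    -- linear lower bound
    have hsum_ge : s * ‖x j - y‖ ^ 2 + s * δ ≤ ∑ i ∈ S, w i * ‖x i - y‖ ^ 2 := by
      have h1 : (∑ i ∈ S, w i * (‖x j - y‖ ^ 2 + δ)) ≤ ∑ i ∈ S, w i * ‖x i - y‖ ^ 2 := by
        refine Finset.sum_le_sum fun i hi => mul_le_mul_of_nonneg_left ?_ (hw0 i)
        have h2 := Finset.inf'_le (fun i => ‖x i - y‖ ^ 2 - ‖x j - y‖ ^ 2) hi
        rw [← hδ_def] at h2
        linarith
      have h3 : (∑ i ∈ S, w i * (‖x j - y‖ ^ 2 + δ)) = s * ‖x j - y‖ ^ 2 + s * δ := by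
        rw [hs_def, ← Finset.sum_mul]; ring
      linarith
    have hkey : w j * ‖x j - y‖ ^ 2 + s * ‖x j - y‖ ^ 2 = ‖x j - y‖ ^ 2 := by
      rw [← add_mul, hwj, one_mul]
    have hL : ‖x j - y‖ ^ 2 + δ * s ≤ ∑ i, w i * ‖x i - y‖ ^ 2 := by
      rw [← Finset.add_sum_erase Finset.univ (fun i => w i * ‖x i - y‖ ^ 2)
        (Finset.mem_univ j)]
      linarith
    -- quadratic lower bound
    set v : EuclideanSpace ℝ (Fin d) := (∑ i, w i • x i) - y with hv_def
    have hvu : v - (x j - y) = ∑ i, w i • (x i - x j) := by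
      simp only [smul_sub]
      rw [Finset.sum_sub_distrib, ← Finset.sum_smul, hw1, one_smul, hv_def]
      abel
    have hzb : ‖v - (x j - y)‖ ≤ s * M := by
      rw [hvu]
      refine le_trans (norm_sum_le _ _) ?_
      rw [show s * M = ∑ i ∈ S, w i * M from by rw [hs_def, Finset.sum_mul],
        ← Finset.add_sum_erase Finset.univ (fun i => ‖w i • (x i - x j)‖)
          (Finset.mem_univ j)]
      simp only [sub_self, smul_zero, norm_zero, zero_add]
      refine Finset.sum_le_sum fun i hi => ?_
      rw [norm_smul, Real.norm_eq_abs, abs_of_nonneg (hw0 i)]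
      refine mul_le_mul_of_nonneg_left ?_ (hw0 i)
      rw [norm_sub_rev]; exact hMi i
    have hv1 : r - ‖v‖ ≤ s * M := by
      have h1 : ‖x j - y‖ - ‖v‖ ≤ ‖(x j - y) - v‖ := norm_sub_norm_le _ _
      have h2 : ‖(x j - y) - v‖ = ‖v - (x j - y)‖ := norm_sub_rev _ _
      rw [h2] at h1
      calc r - ‖v‖ ≤ ‖v - (x j - y)‖ := h1
        _ ≤ s * M := hzb
    have hv0 : 0 ≤ ‖v‖ := norm_nonneg _
    -- finish
    rw [hsum1, hsum2]
    have hρL : ρ * (‖x j - y‖ ^ 2 + δ * s) ≤ ρ * ∑ i, w i * ‖x i - y‖ ^ 2 :=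
      mul_le_mul_of_nonneg_left hL hρ0
    have hρδs : (r * M + 1) * s ≤ (ρ * δ) * s :=
      mul_le_mul_of_nonneg_right hρδ hs0
    have hc1 : 0 ≤ r * (s * M - (r - ‖v‖)) :=
      mul_nonneg hr0 (by linarith)
    have hc2 : 0 ≤ (r - ‖v‖) ^ 2 := sq_nonneg _
    have hveq : ‖(∑ i, w i • x i) - y‖ = ‖v‖ := by rw [hv_def]
    rw [hveq, ← hr_def]
    nlinarith [hρL, hρδs, hc1, hc2, hspos, mul_nonneg hs0 hM0]
end
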